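/- Let I be a nonempty set and λ > 0, and for each ι ∈ I let y_ι : [0,∞) → ℝ be continuous on [0,∞), differentiable on (0,∞) and nonnegative, and let f_ι : (0,∞) → ℝ be continuous and nonnegative, with y_ι'(t) + λ·y_ι(t) ≤ f_ι(t) for all t > 0. Assume that sup_{ι∈I} y_ι(0) < ∞, that sup_{ι∈I} sup_{t>0} f_ι(t) < ∞, and that sup_{ι∈I} ∫_t^{t+1} f_ι(s) ds → 0 as t → ∞. Then sup_{ι∈I} y_ι(t) → 0 as t → ∞. -/

import Mathlib

open MeasureTheory Set intervalIntegral

lemma my_fint {f : ℝ → ℝ} (hfcont : ContinuousOn f (Set.Ioi 0))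
    {a b : ℝ} (ha : 0 < a) (hab : a ≤ b) : IntervalIntegrable f volume a b := by
  apply ContinuousOn.intervalIntegrable
  apply hfcont.mono
  rw [Set.uIcc_of_le hab]
  exact fun x hx => lt_of_lt_of_le ha hx.1

/-- one-step comparison -/
lemma my_stepA (lam : ℝ) (hlam : 0 < lam) (y y' f : ℝ → ℝ)
    (hyderiv : ∀ t > (0:ℝ), HasDerivAt y (y' t) t)
    (hfcont : ContinuousOn f (Set.Ioi 0))
    (hfnn : ∀ t > (0:ℝ), 0 ≤ f t)
    (hODE : ∀ t > (0:ℝ), y' t + lam * y t ≤ f t)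
    {a b : ℝ} (ha : 0 < a) (hab : a ≤ b) :
    y b ≤ Real.exp (-(lam * (b - a))) * y a + ∫ s in a..b, f s := by
  set F : ℝ → ℝ := fun u => Real.exp (lam * u) * f u with hF
  have hsub : Set.Icc a b ⊆ Set.Ioi 0 := fun x hx => lt_of_lt_of_le ha hx.1
  have hFcont : ContinuousOn F (Set.Ioi 0) := by
    exact (Real.continuous_exp.comp (continuous_const.mul continuous_id)).continuousOn.mul hfcont
  have hFint : ∀ s ∈ Set.Icc a b, IntervalIntegrable F volume a s :=
    fun s hs => my_fint hFcont ha hs.1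
  set g : ℝ → ℝ := fun s => Real.exp (lam * s) * y s - ∫ u in a..s, F u with hg
  have hgderiv : ∀ s ∈ Set.Icc a b,
      HasDerivAt g (Real.exp (lam * s) * (y' s + lam * y s) - F s) s := by
    intro s hs
    have hs0 : (0:ℝ) < s := hsub hs
    have h1 : HasDerivAt (fun u => Real.exp (lam * u) * y u)
        (lam * Real.exp (lam * s) * y s + Real.exp (lam * s) * y' s) s := by
      have he : HasDerivAt (fun u => Real.exp (lam * u)) (lam * Real.exp (lam * s)) s := by
        have := ((hasDerivAt_id s).const_mul lam).exp
        simpa [mul_comm] using this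
      exact he.mul (hyderiv s hs0)
    have h2 : HasDerivAt (fun u => ∫ v in a..u, F v) (F s) s := by
      refine integral_hasDerivAt_right (hFint s hs) ?_ ?_
      · exact ⟨Set.Ioi 0, Ioi_mem_nhds hs0, hFcont.aestronglyMeasurable measurableSet_Ioi⟩
      · exact hFcont.continuousAt (Ioi_mem_nhds hs0)
    have := h1.sub h2
    exact this.congr_deriv (by ring)
  have hanti : AntitoneOn g (Set.Icc a b) := by
    apply antitoneOn_of_deriv_nonpos (convex_Icc a b)
    · exact fun s hs => (hgderiv s hs).continuousAt.continuousWithinAt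
    · intro s hs
      rw [interior_Icc] at hs
      exact ((hgderiv s (Ioo_subset_Icc_self hs)).differentiableAt).differentiableWithinAt
    · intro s hs
      rw [interior_Icc] at hs
      rw [(hgderiv s (Ioo_subset_Icc_self hs)).deriv]
      have hs0 : (0:ℝ) < s := hsub (Ioo_subset_Icc_self hs)
      have := hODE s hs0
      have hep : (0:ℝ) < Real.exp (lam * s) := Real.exp_pos _
      have : Real.exp (lam * s) * (y' s + lam * y s) ≤ Real.exp (lam * s) * f s :=
        mul_le_mul_of_nonneg_left this hep.le
      simpa [hF] using sub_nonpos.mpr this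
  have hgba : g b ≤ g a := hanti (Set.left_mem_Icc.mpr hab) (Set.right_mem_Icc.mpr hab) hab
  have hga : g a = Real.exp (lam * a) * y a := by simp [hg]
  have hIle : (∫ u in a..b, F u) ≤ Real.exp (lam * b) * ∫ u in a..b, f u := by
    rw [← intervalIntegral.integral_const_mul]
    apply intervalIntegral.integral_mono_on hab (hFint b (Set.right_mem_Icc.mpr hab))
      ((my_fint hfcont ha hab).const_mul _)
    intro u hu
    have hu0 : (0:ℝ) < u := hsub hu
    exact mul_le_mul_of_nonneg_right
      (Real.exp_le_exp.mpr (mul_le_mul_of_nonneg_left hu.2 hlam.le)) (hfnn u hu0)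
  have h1 : Real.exp (lam * b) * y b ≤ Real.exp (lam * a) * y a
      + Real.exp (lam * b) * ∫ u in a..b, f u := by
    have : Real.exp (lam * b) * y b - ∫ u in a..b, F u ≤ Real.exp (lam * a) * y a := by
      rw [← hga]; exact hgba
    linarith
  have hEb : (0:ℝ) < Real.exp (lam * b) := Real.exp_pos _
  rw [← mul_le_mul_iff_of_pos_right hEb]
  have key : (Real.exp (-(lam * (b - a))) * y a + ∫ s in a..b, f s) * Real.exp (lam * b)
      = Real.exp (lam * a) * y a + Real.exp (lam * b) * ∫ s in a..b, f s := by
    rw [add_mul]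
    have : Real.exp (-(lam * (b - a))) * Real.exp (lam * b) = Real.exp (lam * a) := by
      rw [← Real.exp_add]; ring_nf
    rw [mul_right_comm, this]; ring
  rw [key]
  calc y b * Real.exp (lam * b) = Real.exp (lam * b) * y b := by ring
    _ ≤ _ := h1

lemma my_intle {f : ℝ → ℝ} (hfcont : ContinuousOn f (Set.Ioi 0)) {Mf : ℝ}
    (hMf : ∀ t > (0:ℝ), f t ≤ Mf) {a b : ℝ} (ha : 0 < a) (hab : a ≤ b) :
    (∫ s in a..b, f s) ≤ Mf * (b - a) := by
  have h := intervalIntegral.integral_mono_on hab (my_fint hfcont ha hab)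
    intervalIntegrable_const (fun u hu => hMf u (lt_of_lt_of_le ha hu.1))
  simpa [mul_comm] using h

/-- Uniform ODE comparison lemma (Lemma 6.2): if for each `ι` in a nonempty family `I`
the nonnegative functions `y_ι` satisfy `y_ι' + λ y_ι ≤ f_ι` on `(0,∞)` with nonnegative
continuous `f_ι`, uniformly bounded initial data `y_ι(0)`, uniformly bounded `f_ι`, and
`sup_ι ∫_t^{t+1} f_ι → 0` as `t → ∞`, then `sup_ι y_ι(t) → 0` as `t → ∞`. -/
theorem ode_family_decay {I : Type*} [Nonempty I] (lam : ℝ) (hlam : 0 < lam)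
    (y y' f : I → ℝ → ℝ)
    (hycont : ∀ ι, ContinuousOn (y ι) (Set.Ici 0))
    (hyderiv : ∀ ι, ∀ t > (0:ℝ), HasDerivAt (y ι) (y' ι t) t)
    (hynn : ∀ ι, ∀ t ≥ (0:ℝ), 0 ≤ y ι t)
    (hfcont : ∀ ι, ContinuousOn (f ι) (Set.Ioi 0))
    (hfnn : ∀ ι, ∀ t > (0:ℝ), 0 ≤ f ι t)
    (hODE : ∀ ι, ∀ t > (0:ℝ), y' ι t + lam * y ι t ≤ f ι t)
    (hy0 : ∃ M : ℝ, ∀ ι, y ι 0 ≤ M)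
    (hfbdd : ∃ M : ℝ, ∀ ι, ∀ t > (0:ℝ), f ι t ≤ M)
    (hfto0 : ∀ δ > (0:ℝ), ∃ T : ℝ, ∀ t ≥ T, ∀ ι, (∫ s in t..(t + 1), f ι s) < δ) :
    ∀ δ > (0:ℝ), ∃ T : ℝ, ∀ t ≥ T, ∀ ι, y ι t < δ := by
  intro δ hδ
  obtain ⟨M, hM⟩ := hy0
  obtain ⟨Mf, hMf⟩ := hfbdd
  set M' := max M 0 with hM'def
  set Mf' := max Mf 0 with hMf'def
  have hM' : ∀ ι, y ι 0 ≤ M' := fun ι => (hM ι).trans (le_max_left _ _)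
  have hMf' : ∀ ι, ∀ t > (0:ℝ), f ι t ≤ Mf' :=
    fun ι t ht => (hMf ι t ht).trans (le_max_left _ _)
  have hMf'0 : (0:ℝ) ≤ Mf' := le_max_right _ _
  have hM'0 : (0:ℝ) ≤ M' := le_max_right _ _
  set q := Real.exp (-lam) with hqdef
  have hq0 : 0 < q := Real.exp_pos _
  have hq1 : q < 1 := Real.exp_lt_one_iff.mpr (by linarith)
  have h1q : 0 < 1 - q := by linarith
  -- unit step
  have step : ∀ ι, ∀ t : ℝ, 0 < t - 1 →
      y ι t ≤ q * y ι (t - 1) + ∫ s in (t-1)..t, f ι s := by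
    intro ι t ht
    have h := my_stepA lam hlam (y ι) (y' ι) (f ι) (hyderiv ι) (hfcont ι) (hfnn ι)
      (hODE ι) ht (by linarith)
    have he : -(lam * (t - (t - 1))) = -lam := by ring
    rwa [he] at h
  -- bound on (0,1]
  have bound01 : ∀ ι, ∀ t : ℝ, 0 < t → t ≤ 1 → y ι t ≤ M' + Mf' := by
    intro ι t ht ht1
    have hev : ∀ᶠ a in nhdsWithin 0 (Set.Ioi 0), y ι t ≤ y ι a + Mf' := by
      filter_upwards [Ioo_mem_nhdsGT ht] with a ha
      have h := my_stepA lam hlam (y ι) (y' ι) (f ι) (hyderiv ι) (hfcont ι) (hfnn ι)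
        (hODE ι) ha.1 ha.2.le
      have hint : (∫ s in a..t, f ι s) ≤ Mf' * (t - a) :=
        my_intle (hfcont ι) (hMf' ι) ha.1 ha.2.le
      have hexp : Real.exp (-(lam * (t - a))) ≤ 1 :=
        Real.exp_le_one_iff.mpr (by nlinarith [ha.2])
      have hya : 0 ≤ y ι a := hynn ι a ha.1.le
      nlinarith [ha.1, ha.2]
    have hlim : Filter.Tendsto (fun a => y ι a + Mf') (nhdsWithin 0 (Set.Ioi 0))
        (nhds (y ι 0 + Mf')) := by
      have hc : ContinuousWithinAt (y ι) (Set.Ioi 0) 0 :=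
        (hycont ι 0 Set.self_mem_Ici).mono (Set.Ioi_subset_Ici le_rfl)
      exact hc.tendsto.add tendsto_const_nhds
    have := ge_of_tendsto hlim hev
    linarith [hM' ι]
  -- global bound
  set C := max (M' + Mf') (Mf' / (1 - q)) with hCdef
  have hqC : q * C + Mf' ≤ C := by
    have h2 : Mf' / (1 - q) ≤ C := le_max_right _ _
    have h3 : Mf' ≤ C * (1 - q) := (div_le_iff₀ h1q).mp h2
    nlinarith
  have hC0 : 0 ≤ C := le_trans (by positivity) (le_max_left _ _)
  have hCglobal : ∀ ι, ∀ t : ℝ, 0 ≤ t → y ι t ≤ C := by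
    have key : ∀ n : ℕ, ∀ ι, ∀ t : ℝ, 0 < t → t ≤ n + 1 → y ι t ≤ C := by
      intro n
      induction n with
      | zero =>
        intro ι t ht ht1
        exact (bound01 ι t ht (by simpa using ht1)).trans (le_max_left _ _)
      | succ n ih =>
        intro ι t ht ht1
        by_cases h : t ≤ n + 1
        · exact ih ι t ht h
        · push_neg at h
          have h1 : 0 < t - 1 := by
            have : (0:ℝ) ≤ n := n.cast_nonneg
            linarith
          have hs := step ι t h1
          have hy1 : y ι (t - 1) ≤ C := ih ι (t - 1) h1 (by push_cast at ht1 ⊢; linarith)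
          have hint : (∫ s in (t-1)..t, f ι s) ≤ Mf' * (t - (t - 1)) :=
            my_intle (hfcont ι) (hMf' ι) h1 (by linarith)
          nlinarith
    intro ι t ht
    rcases eq_or_lt_of_le ht with h | h
    · have := hM' ι
      have h2 : M' + Mf' ≤ C := le_max_left _ _
      rw [← h]
      linarith
    · exact key ⌈t⌉₊ ι t h (le_trans (Nat.le_ceil t) (by push_cast; linarith))
  -- choose parameters
  set C1 := max C 1 with hC1def
  have hC1p : (0:ℝ) < C1 := lt_of_lt_of_le one_pos (le_max_right _ _)
  obtain ⟨n, hn⟩ := exists_pow_lt_of_lt_one (x := δ / 2 / C1) (by positivity) hq1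
  set ε := δ / 2 * (1 - q) with hεdef
  have hεp : 0 < ε := by positivity
  obtain ⟨T₀, hT₀⟩ := hfto0 ε hεp
  set T₁ := max T₀ 0 with hT₁def
  have hT₁0 : (0:ℝ) ≤ T₁ := le_max_right _ _
  refine ⟨T₁ + 1 + n, ?_⟩
  have main : ∀ m : ℕ, ∀ t : ℝ, T₁ + 1 + m ≤ t → ∀ ι,
      y ι t ≤ q ^ m * C1 + ε * ∑ k ∈ Finset.range m, q ^ k := by
    intro m
    induction m with
    | zero =>
      intro t htt ι
      have ht0 : (0:ℝ) ≤ t := by push_cast at htt; linarith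
      simp only [pow_zero, one_mul, Finset.range_zero, Finset.sum_empty, mul_zero, add_zero]
      exact (hCglobal ι t ht0).trans (le_max_left C 1)
    | succ m ih =>
      intro t htt ι
      have ht1 : T₁ + 1 + m ≤ t - 1 := by push_cast at htt ⊢; linarith
      have h1 : 0 < t - 1 := by
        have : (0:ℝ) ≤ m := m.cast_nonneg
        linarith
      have hstep := step ι t h1
      have hI : (∫ s in (t-1)..t, f ι s) < ε := by
        have hm : (0:ℝ) ≤ m := m.cast_nonneg
        have h2 : T₀ ≤ T₁ := le_max_left _ _
        have h := hT₀ (t - 1) (by linarith) ι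
        have he : t - 1 + 1 = t := by ring
        rwa [he] at h
      have hih := ih (t - 1) ht1 ι
      have hmul : q * y ι (t - 1) ≤ q * (q ^ m * C1 + ε * ∑ k ∈ Finset.range m, q ^ k) :=
        mul_le_mul_of_nonneg_left hih hq0.le
      have hsum : ∑ k ∈ Finset.range (m + 1), q ^ k
          = q * ∑ k ∈ Finset.range m, q ^ k + 1 := geom_sum_succ
      rw [hsum, pow_succ]
      nlinarith
  intro t ht ι
  have hmn := main n t ht ι
  have hgs : (∑ k ∈ Finset.range n, q ^ k) ≤ 1 / (1 - q) := by
    rw [le_div_iff₀ h1q]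
    have := geom_sum_mul q n
    nlinarith [pow_pos hq0 n]
  have hA : q ^ n * C1 < δ / 2 := (lt_div_iff₀ hC1p).mp hn
  have hB : ε * ∑ k ∈ Finset.range n, q ^ k ≤ δ / 2 := by
    have h2 : ε * ∑ k ∈ Finset.range n, q ^ k ≤ ε * (1 / (1 - q)) :=
      mul_le_mul_of_nonneg_left hgs hεp.le
    have h3 : ε * (1 / (1 - q)) = δ / 2 := by
      rw [hεdef]; field_simp
    linarith
  linarith
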